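/- Let f : ℕ → ℂ be multiplicative with f(n²) = f(n)² for all n, satisfying f(x² − xy + y²) = f(x)² − f(x)f(y) + f(y)² for all positive integers x, y. If p is a prime with f(p) = 0, then f(pℓ) = 0 for every positive integer ℓ. -/
import Mathlib


theorem stmt_17 (f : ℕ → ℂ) (h1 : f 1 = 1)
    (hmul : ∀ m n : ℕ, Nat.gcd m n = 1 → f (m * n) = f m * f n)
    (hsq : ∀ n : ℕ, f (n ^ 2) = f n ^ 2)
    (hfe : ∀ x y : ℕ, 0 < x → 0 < y →
      f (x ^ 2 + y ^ 2 - x * y) = f x ^ 2 - f x * f y + f y ^ 2)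
    (p : ℕ) (hp : p.Prime) (hfp : f p = 0) :
    ∀ ℓ : ℕ, 0 < ℓ → f (p * ℓ) = 0 := by
  intro ℓ hℓ
  rcases Nat.coprime_or_dvd_of_prime hp ℓ with hc | hd
  · rw [hmul p ℓ hc, hfp, zero_mul]
  · -- p ∣ ℓ : use the identity p² + (pℓ)² − p·(pℓ) = p²(ℓ² − ℓ + 1)
    have hm : ℓ ≤ ℓ ^ 2 := by nlinarith
    have h2 : p * (p * ℓ) ≤ p ^ 2 + (p * ℓ) ^ 2 := by nlinarith
    have key : p ^ 2 + (p * ℓ) ^ 2 - p * (p * ℓ) = p ^ 2 * (ℓ ^ 2 - ℓ + 1) := by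
      zify [h2, hm]; ring
    have hndvd : ¬ p ∣ (ℓ ^ 2 - ℓ + 1) := by
      intro hdvd
      have h3 : p ∣ ℓ ^ 2 - ℓ := by
        have : ℓ ^ 2 - ℓ = ℓ * (ℓ - 1) := by cases ℓ with
          | zero => simp
          | succ n => simp [pow_two]; ring_nf; omega
        rw [this]; exact hd.mul_right _
      have h4 : p ∣ 1 := (Nat.dvd_add_right h3).mp hdvd
      rw [Nat.dvd_one] at h4
      exact hp.one_lt.ne' h4
    have hcop : Nat.gcd (p ^ 2) (ℓ ^ 2 - ℓ + 1) = 1 :=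
      Nat.Coprime.pow_left 2 ((Nat.Prime.coprime_iff_not_dvd hp).mpr hndvd)
    have heq := hfe p (p * ℓ) hp.pos (Nat.mul_pos hp.pos hℓ)
    rw [key, hmul _ _ hcop, hsq p, hfp] at heq
    have : f (p * ℓ) ^ 2 = 0 := by
      have := heq.symm
      linear_combination -heq
    exact pow_eq_zero_iff (n := 2) (by norm_num) |>.mp this
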